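/- Let 1/2 < α < 3/2. Then the function ε ↦ ∫_{1/2}^{3/2} ((1-r²)² + ε²)^{-α} dr − C_α ε^{1-2α} is bounded as ε → 0⁺, where C_α = ∫_{-∞}^{∞} (4t² + 1)^{-α} dt; in particular ∫_{1/2}^{3/2} ((1-r²)² + ε²)^{-α} dr = C_α ε^{1-2α} + O(1) uniformly for ε ∈ (0,1]. -/

import Mathlib

open MeasureTheory intervalIntegral Set

-- integrability of the model function
lemma aux_integrable_g {α : ℝ} (hα : 1 / 2 < α) :
    Integrable (fun t : ℝ => (4 * t ^ 2 + 1) ^ (-α)) := by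
  have hcont : Continuous fun t : ℝ => (4 * t ^ 2 + 1) ^ (-α) :=
    Continuous.rpow_const (by continuity) (fun t => Or.inl (by positivity))
  have h1 : ((Module.finrank ℝ ℝ : ℕ) : ℝ) < 2 * α := by
    rw [Module.finrank_self]; push_cast; linarith
  have hint : Integrable (fun t : ℝ => (2:ℝ) ^ α * (1 + ‖t‖) ^ (-(2*α))) :=
    (integrable_one_add_norm (μ := volume) h1).const_mul _
  refine hint.mono' hcont.aestronglyMeasurable (Filter.Eventually.of_forall fun t => ?_)
  rw [Real.norm_eq_abs, abs_of_nonneg (Real.rpow_nonneg (by positivity) _)]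
  have hb : (0:ℝ) < (1 + |t|) ^ 2 / 2 := by positivity
  have hle : (1 + |t|) ^ 2 / 2 ≤ 4 * t ^ 2 + 1 := by
    have := sq_abs t
    nlinarith [abs_nonneg t, sq_nonneg (1 - |t|)]
  calc (4 * t ^ 2 + 1) ^ (-α) ≤ ((1 + |t|) ^ 2 / 2) ^ (-α) :=
        Real.rpow_le_rpow_of_nonpos hb hle (by linarith)
    _ = (2:ℝ) ^ α * (1 + ‖t‖) ^ (-(2*α)) := by
        rw [Real.div_rpow (by positivity) (by norm_num), Real.norm_eq_abs,
          ← Real.rpow_natCast (1 + |t|) 2, ← Real.rpow_mul (by positivity)]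
        rw [Real.rpow_neg (by norm_num : (0:ℝ) ≤ 2), div_inv_eq_mul]
        push_cast
        ring_nf

-- pointwise scaling identity
lemma aux_scale_pt {α ε : ℝ} (hε : 0 < ε) (v : ℝ) :
    (4 * v ^ 2 + ε ^ 2) ^ (-α) = ε ^ (-(2*α)) * (4 * (v / ε) ^ 2 + 1) ^ (-α) := by
  have h1 : 4 * v ^ 2 + ε ^ 2 = ε ^ 2 * (4 * (v / ε) ^ 2 + 1) := by
    field_simp
  rw [h1, Real.mul_rpow (by positivity) (by positivity)]
  congr 1
  rw [← Real.rpow_natCast ε 2, ← Real.rpow_mul hε.le]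
  norm_num

lemma aux_integrable_f {α ε : ℝ} (hα : 1 / 2 < α) (hε : 0 < ε) :
    Integrable (fun v : ℝ => (4 * v ^ 2 + ε ^ 2) ^ (-α)) := by
  have : (fun v : ℝ => (4 * v ^ 2 + ε ^ 2) ^ (-α))
      = fun v : ℝ => ε ^ (-(2*α)) * (4 * (v / ε) ^ 2 + 1) ^ (-α) := by
    funext v; exact aux_scale_pt hε v
  rw [this]
  exact ((aux_integrable_g hα).comp_div hε.ne').const_mul _

-- scaling of the full-line integral
lemma aux_scale_integral {α ε : ℝ} (hα : 1 / 2 < α) (hε : 0 < ε) :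
    (∫ t : ℝ, (4 * t ^ 2 + 1) ^ (-α)) * ε ^ (1 - 2 * α)
      = ∫ v : ℝ, (4 * v ^ 2 + ε ^ 2) ^ (-α) := by
  have h1 : (fun v : ℝ => (4 * v ^ 2 + ε ^ 2) ^ (-α))
      = fun v : ℝ => ε ^ (-(2*α)) * (4 * (v / ε) ^ 2 + 1) ^ (-α) := by
    funext v; exact aux_scale_pt hε v
  rw [h1, MeasureTheory.integral_const_mul, Measure.integral_comp_div
    (fun t : ℝ => (4 * t ^ 2 + 1) ^ (-α)) ε]
  rw [abs_of_pos hε, smul_eq_mul]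
  rw [show (1 - 2*α) = -(2*α) + 1 by ring, Real.rpow_add hε, Real.rpow_one]
  ring

-- continuity of the transformed integrand on `Ici (-3/8)`
lemma aux_contOn {α ε : ℝ} (hε : 0 < ε) :
    ContinuousOn (fun v : ℝ => (4 * v ^ 2 + ε ^ 2) ^ (-α) * (Real.sqrt (1 + 2 * v))⁻¹)
      (Ici (-(3/8) : ℝ)) := by
  apply ContinuousOn.mul
  · apply ContinuousOn.rpow_const (by fun_prop)
    intro v _
    exact Or.inl (by positivity)
  · apply ContinuousOn.inv₀
    · exact (Real.continuous_sqrt.comp (by continuity)).continuousOn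
    · intro v hv
      have h1 : (0:ℝ) < 1 + 2 * v := by
        simp only [mem_Ici] at hv; linarith
      exact ne_of_gt (Real.sqrt_pos.mpr h1)

-- change of variables
lemma aux_subst {α ε : ℝ} (hε : 0 < ε) :
    (∫ r in (1 / 2 : ℝ)..(3 / 2), ((1 - r ^ 2) ^ 2 + ε ^ 2) ^ (-α))
      = ∫ v in (-(3/8) : ℝ)..(5/8),
          (4 * v ^ 2 + ε ^ 2) ^ (-α) * (Real.sqrt (1 + 2 * v))⁻¹ := by
  have key := intervalIntegral.integral_comp_smul_deriv'
    (a := (1/2 : ℝ)) (b := (3/2 : ℝ))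
    (f := fun r => (r ^ 2 - 1) / 2) (f' := fun r => r)
    (g := fun v => (4 * v ^ 2 + ε ^ 2) ^ (-α) * (Real.sqrt (1 + 2 * v))⁻¹)
    (fun x _ => by
      simpa using ((hasDerivAt_pow 2 x).sub_const 1).div_const 2)
    (continuousOn_id)
    (by
      apply (aux_contOn (α := α) hε).mono
      rintro v ⟨r, hr, rfl⟩
      rw [uIcc_of_le (by norm_num)] at hr
      have h1 : (1/2 : ℝ) ≤ r := hr.1
      simp only [mem_Ici]
      nlinarith)
  have e1 : ((1/2:ℝ) ^ 2 - 1) / 2 = -(3/8) := by norm_num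
  have e2 : ((3/2:ℝ) ^ 2 - 1) / 2 = 5/8 := by norm_num
  beta_reduce at key
  rw [e1, e2] at key
  rw [← key]
  apply intervalIntegral.integral_congr
  intro r hr
  rw [uIcc_of_le (by norm_num)] at hr
  have hrpos : (0:ℝ) < r := lt_of_lt_of_le (by norm_num) hr.1
  have h1 : 1 + 2 * ((r ^ 2 - 1) / 2) = r ^ 2 := by ring
  have h2 : 4 * ((r ^ 2 - 1) / 2) ^ 2 = (1 - r ^ 2) ^ 2 := by ring
  simp only [Function.comp, smul_eq_mul, h1, h2, Real.sqrt_sq hrpos.le]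
  field_simp

-- pointwise estimate for the weight
lemma aux_weight {v : ℝ} (hv : v ∈ Icc (-(3/8) : ℝ) (3/8)) :
    |(Real.sqrt (1 + 2 * v))⁻¹ - 1 + v| ≤ 8 * v ^ 2 := by
  obtain ⟨hv1, hv2⟩ := hv
  set s := Real.sqrt (1 + 2 * v) with hs
  have h14 : (1/4 : ℝ) ≤ 1 + 2 * v := by linarith
  have hs2 : (1/2 : ℝ) ≤ s := by
    rw [hs, show (1/2 : ℝ) = Real.sqrt (1/4) by
      rw [show (1/4:ℝ) = (1/2)^2 by norm_num, Real.sqrt_sq (by norm_num)]]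
    exact Real.sqrt_le_sqrt h14
  have hspos : (0:ℝ) < s := by linarith
  set x := 1 - 3 * v ^ 2 + 2 * v ^ 3 with hx
  have hxnn : (0:ℝ) ≤ x := by nlinarith [sq_nonneg v, abs_le.mpr ⟨hv1, hv2⟩]
  have hx1 : x ≤ 1 := by nlinarith [sq_nonneg v]
  have hfac : (1 - v) ^ 2 * (1 + 2 * v) = x := by ring
  have hsx : Real.sqrt x = (1 - v) * s := by
    rw [← hfac, Real.sqrt_mul (sq_nonneg _), Real.sqrt_sq (by linarith)]
  have hsxx : x ≤ Real.sqrt x := by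
    nth_rewrite 1 [← Real.sqrt_sq hxnn]
    exact Real.sqrt_le_sqrt (by nlinarith)
  have hsx1 : Real.sqrt x ≤ 1 := by
    rw [show (1:ℝ) = Real.sqrt 1 by simp]
    exact Real.sqrt_le_sqrt hx1
  have key : s⁻¹ - 1 + v = (1 - Real.sqrt x) * s⁻¹ := by
    rw [hsx]
    field_simp
    ring
  rw [key, abs_of_nonneg (by
    apply mul_nonneg (by linarith) (by positivity))]
  have h1 : 1 - Real.sqrt x ≤ 4 * v ^ 2 := by nlinarith [abs_le.mpr ⟨hv1, hv2⟩, sq_nonneg v]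
  have h2 : s⁻¹ ≤ 2 := by
    rw [inv_le_comm₀ hspos (by norm_num)]
    linarith
  calc (1 - Real.sqrt x) * s⁻¹ ≤ (4 * v ^ 2) * 2 :=
        mul_le_mul h1 h2 (by positivity) (by positivity)
    _ = 8 * v ^ 2 := by ring


lemma aux_intervalIntegrable_abs_rpow {r : ℝ} (hr : -1 < r) (c : ℝ) :
    IntervalIntegrable (fun v : ℝ => |v| ^ r) volume (-c) c := by
  have h1 : ∀ d : ℝ, 0 ≤ d → IntervalIntegrable (fun v : ℝ => |v| ^ r) volume 0 d := by
    intro d hd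
    rw [intervalIntegrable_iff, uIoc_of_le hd]
    have h := (intervalIntegrable_rpow' hr (a := 0) (b := d)).def'
    rw [uIoc_of_le hd] at h
    exact h.congr_fun (fun v hv => by rw [abs_of_pos hv.1]) measurableSet_Ioc
  rcases le_total 0 c with hc | hc
  · have h2 := (IntervalIntegrable.iff_comp_neg (by simp)).mp (h1 c hc)
    have h3 : (fun x : ℝ => |(-x)| ^ r) = fun x : ℝ => |x| ^ r := by
      funext x; rw [abs_neg]
    rw [h3, neg_zero] at h2
    exact h2.symm.trans (h1 c hc)
  · have h0 : (0:ℝ) ≤ -c := by linarith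
    have h2 := (IntervalIntegrable.iff_comp_neg (by simp)).mp (h1 (-c) h0)
    have h3 : (fun x : ℝ => |(-x)| ^ r) = fun x : ℝ => |x| ^ r := by
      funext x; rw [abs_neg]
    rw [h3, neg_zero, neg_neg] at h2
    exact ((h1 (-c) h0).symm.trans h2)

-- pointwise bound for the main term
lemma aux_main_pt {α ε v : ℝ} (hα : 1/2 < α) (hε : 0 < ε)
    (hv : v ∈ Icc (-(3/8) : ℝ) (3/8)) :
    ‖(4 * v ^ 2 + ε ^ 2) ^ (-α) * ((Real.sqrt (1 + 2 * v))⁻¹ - 1 + v)‖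
      ≤ 8 * (4:ℝ) ^ (-α) * |v| ^ (2 - 2 * α) := by
  rcases eq_or_ne v 0 with rfl | hv0
  · have : (Real.sqrt (1 + 2 * 0))⁻¹ - 1 + 0 = 0 := by norm_num
    rw [this, mul_zero, norm_zero]
    positivity
  · have hvpos : (0:ℝ) < |v| := abs_pos.mpr hv0
    have hf : (4 * v ^ 2 + ε ^ 2) ^ (-α) ≤ (4:ℝ) ^ (-α) * |v| ^ (-(2*α)) := by
      have h1 : (4 * v ^ 2 + ε ^ 2) ^ (-α) ≤ (4 * v ^ 2) ^ (-α) :=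
        Real.rpow_le_rpow_of_nonpos (by positivity) (by nlinarith [sq_nonneg ε])
          (by linarith)
      have h2 : (4 * v ^ 2 : ℝ) ^ (-α) = (4:ℝ) ^ (-α) * |v| ^ (-(2*α)) := by
        rw [show (4 * v ^ 2 : ℝ) = 4 * |v| ^ 2 by rw [sq_abs],
          Real.mul_rpow (by norm_num) (by positivity),
          ← Real.rpow_natCast |v| 2, ← Real.rpow_mul (abs_nonneg v)]
        norm_num
      linarith
    rw [norm_mul, Real.norm_eq_abs, Real.norm_eq_abs,
      abs_of_nonneg (Real.rpow_nonneg (by positivity) _)]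
    have hw := aux_weight hv
    calc (4 * v ^ 2 + ε ^ 2) ^ (-α) * |(Real.sqrt (1 + 2 * v))⁻¹ - 1 + v|
        ≤ ((4:ℝ) ^ (-α) * |v| ^ (-(2*α))) * (8 * v ^ 2) := by
          apply mul_le_mul hf hw (abs_nonneg _) (by positivity)
      _ = 8 * (4:ℝ) ^ (-α) * |v| ^ (2 - 2 * α) := by
          rw [show (2 - 2*α) = -(2*α) + 2 by ring, Real.rpow_add hvpos,
            Real.rpow_two, sq_abs]
          ring

-- tail estimate
lemma aux_tail {α ε : ℝ} (hα : 1 / 2 < α) (hε : 0 < ε) :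
    |(∫ v : ℝ, (4 * v ^ 2 + ε ^ 2) ^ (-α))
        - ∫ v in (-(3/8) : ℝ)..(3/8), (4 * v ^ 2 + ε ^ 2) ^ (-α)|
      ≤ 2 * ∫ v in Ioi (3/8 : ℝ), (4:ℝ) ^ (-α) * v ^ (-(2*α)) := by
  set f : ℝ → ℝ := fun v => (4 * v ^ 2 + ε ^ 2) ^ (-α) with hf
  have hInt : Integrable f := aux_integrable_f hα hε
  have e1 : (∫ v in Iic (-(3/8) : ℝ), f v) + ∫ v in Ioi (-(3/8) : ℝ), f v = ∫ v : ℝ, f v :=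
    integral_Iic_add_Ioi hInt.integrableOn hInt.integrableOn
  have e2 : ∫ v in Ioi (-(3/8) : ℝ), f v
      = (∫ v in Ioc (-(3/8) : ℝ) (3/8), f v) + ∫ v in Ioi (3/8 : ℝ), f v := by
    rw [← setIntegral_union (Ioc_disjoint_Ioi le_rfl) measurableSet_Ioi
      hInt.integrableOn hInt.integrableOn,
      Ioc_union_Ioi_eq_Ioi (by norm_num : (-(3/8) : ℝ) ≤ 3/8)]
  have e3 : ∫ v in (-(3/8) : ℝ)..(3/8), f v = ∫ v in Ioc (-(3/8) : ℝ) (3/8), f v := by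
    rw [intervalIntegral.integral_of_le (by norm_num : (-(3/8) : ℝ) ≤ 3/8)]
  have e4 : ∫ v in Iic (-(3/8) : ℝ), f v = ∫ v in Ioi (3/8 : ℝ), f v := by
    have h := integral_comp_neg_Iic (-(3/8) : ℝ) f
    rw [neg_neg] at h
    rw [← h]
    congr 1
    funext x
    simp only [hf, neg_sq]
  have key : (∫ v : ℝ, f v) - (∫ v in (-(3/8) : ℝ)..(3/8), f v)
      = 2 * ∫ v in Ioi (3/8 : ℝ), f v := by
    rw [e3, ← e1, e2, e4]; ring
  rw [key]
  have hIoi_nonneg : 0 ≤ ∫ v in Ioi (3/8 : ℝ), f v :=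
    setIntegral_nonneg measurableSet_Ioi fun v _ => Real.rpow_nonneg (by positivity) _
  rw [abs_of_nonneg (by linarith)]
  have hg0 : IntegrableOn (fun v : ℝ => (4:ℝ) ^ (-α) * v ^ (-(2*α))) (Ioi (3/8 : ℝ)) :=
    (integrableOn_Ioi_rpow_of_lt (by linarith) (by norm_num)).const_mul _
  have hmono : (∫ v in Ioi (3/8 : ℝ), f v)
      ≤ ∫ v in Ioi (3/8 : ℝ), (4:ℝ) ^ (-α) * v ^ (-(2*α)) := by
    apply setIntegral_mono_on hInt.integrableOn hg0 measurableSet_Ioi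
    intro v hv
    have hv0 : (0:ℝ) < v := lt_trans (by norm_num) hv
    have h1 : f v ≤ (4 * v ^ 2 : ℝ) ^ (-α) :=
      Real.rpow_le_rpow_of_nonpos (by positivity) (by nlinarith [sq_nonneg ε]) (by linarith)
    have h2 : (4 * v ^ 2 : ℝ) ^ (-α) = (4:ℝ) ^ (-α) * v ^ (-(2*α)) := by
      rw [Real.mul_rpow (by norm_num) (by positivity),
        ← Real.rpow_natCast v 2, ← Real.rpow_mul hv0.le]
      norm_num
    linarith
  linarith

lemma aux_h_cont : ContinuousOn (fun v : ℝ => (Real.sqrt (1 + 2 * v))⁻¹)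
    (Ici (-(3/8) : ℝ)) := by
  apply ContinuousOn.inv₀
  · exact (Real.continuous_sqrt.comp (by continuity)).continuousOn
  · intro v hv
    have h1 : (0:ℝ) < 1 + 2 * v := by
      simp only [mem_Ici] at hv; linarith
    exact ne_of_gt (Real.sqrt_pos.mpr h1)

theorem singular_constant_asymptotics (α : ℝ) (hα : 1 / 2 < α ∧ α < 3 / 2) :
    ∃ M : ℝ, ∀ ε ∈ Set.Ioc (0 : ℝ) 1,
      |(∫ r in (1 / 2 : ℝ)..(3 / 2), ((1 - r ^ 2) ^ 2 + ε ^ 2) ^ (-α))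
        - (∫ t : ℝ, (4 * t ^ 2 + 1) ^ (-α)) * ε ^ (1 - 2 * α)| ≤ M := by
  obtain ⟨hα1, hα2⟩ := hα
  refine ⟨|∫ v in (-(3/8) : ℝ)..(3/8), 8 * (4:ℝ) ^ (-α) * |v| ^ (2 - 2*α)|
    + (9/16 : ℝ) ^ (-α) * |(5/8 : ℝ) - 3/8|
    + 2 * ∫ v in Ioi (3/8 : ℝ), (4:ℝ) ^ (-α) * v ^ (-(2*α)), ?_⟩
  rintro ε ⟨hε0, hε1⟩
  rw [aux_subst hε0, aux_scale_integral hα1 hε0]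
  -- notation
  have hfc : Continuous fun v : ℝ => (4 * v ^ 2 + ε ^ 2) ^ (-α) :=
    Continuous.rpow_const (by continuity) (fun v => Or.inl (by positivity))
  have hIfh1 : IntervalIntegrable
      (fun v : ℝ => (4 * v ^ 2 + ε ^ 2) ^ (-α) * (Real.sqrt (1 + 2 * v))⁻¹)
      volume (-(3/8)) (3/8) := by
    apply ContinuousOn.intervalIntegrable
    apply (aux_contOn (α := α) hε0).mono
    rw [uIcc_of_le (by norm_num : (-(3/8):ℝ) ≤ 3/8)]
    exact Icc_subset_Ici_self
  have hIfh2 : IntervalIntegrable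
      (fun v : ℝ => (4 * v ^ 2 + ε ^ 2) ^ (-α) * (Real.sqrt (1 + 2 * v))⁻¹)
      volume (3/8) (5/8) := by
    apply ContinuousOn.intervalIntegrable
    apply (aux_contOn (α := α) hε0).mono
    rw [uIcc_of_le (by norm_num : ((3/8):ℝ) ≤ 5/8)]
    intro v hv
    have := hv.1
    simp only [mem_Ici]
    linarith
  have hsplit : (∫ v in (-(3/8) : ℝ)..(5/8),
        (4 * v ^ 2 + ε ^ 2) ^ (-α) * (Real.sqrt (1 + 2 * v))⁻¹)
      = (∫ v in (-(3/8) : ℝ)..(3/8),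
          (4 * v ^ 2 + ε ^ 2) ^ (-α) * (Real.sqrt (1 + 2 * v))⁻¹)
        + ∫ v in ((3/8) : ℝ)..(5/8),
            (4 * v ^ 2 + ε ^ 2) ^ (-α) * (Real.sqrt (1 + 2 * v))⁻¹ :=
    (intervalIntegral.integral_add_adjacent_intervals hIfh1 hIfh2).symm
  -- middle decomposition
  have hIw : IntervalIntegrable
      (fun v : ℝ => (4 * v ^ 2 + ε ^ 2) ^ (-α) * ((Real.sqrt (1 + 2 * v))⁻¹ - 1 + v))
      volume (-(3/8)) (3/8) := by
    apply ContinuousOn.intervalIntegrable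
    apply ContinuousOn.mul hfc.continuousOn
    apply ContinuousOn.add (ContinuousOn.sub ?_ continuousOn_const) continuousOn_id
    apply aux_h_cont.mono
    rw [uIcc_of_le (by norm_num : (-(3/8):ℝ) ≤ 3/8)]
    exact Icc_subset_Ici_self
  have hIf : IntervalIntegrable (fun v : ℝ => (4 * v ^ 2 + ε ^ 2) ^ (-α))
      volume (-(3/8)) (3/8) := hfc.intervalIntegrable _ _
  have hIv : IntervalIntegrable (fun v : ℝ => (4 * v ^ 2 + ε ^ 2) ^ (-α) * v)
      volume (-(3/8)) (3/8) := (hfc.mul continuous_id).intervalIntegrable _ _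
  have hmid : (∫ v in (-(3/8) : ℝ)..(3/8),
        (4 * v ^ 2 + ε ^ 2) ^ (-α) * (Real.sqrt (1 + 2 * v))⁻¹)
      = (∫ v in (-(3/8) : ℝ)..(3/8),
          (4 * v ^ 2 + ε ^ 2) ^ (-α) * ((Real.sqrt (1 + 2 * v))⁻¹ - 1 + v))
        + (∫ v in (-(3/8) : ℝ)..(3/8), (4 * v ^ 2 + ε ^ 2) ^ (-α))
        - ∫ v in (-(3/8) : ℝ)..(3/8), (4 * v ^ 2 + ε ^ 2) ^ (-α) * v := by
    rw [← intervalIntegral.integral_add hIw hIf, ← intervalIntegral.integral_sub (hIw.add hIf) hIv]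
    apply intervalIntegral.integral_congr
    intro v _
    ring
  -- oddness
  have hodd : (∫ v in (-(3/8) : ℝ)..(3/8), (4 * v ^ 2 + ε ^ 2) ^ (-α) * v) = 0 := by
    have h := intervalIntegral.integral_comp_neg
      (fun v : ℝ => (4 * v ^ 2 + ε ^ 2) ^ (-α) * v) (a := -(3/8)) (b := (3/8))
    simp only [neg_neg, neg_sq, mul_neg] at h
    rw [intervalIntegral.integral_neg] at h
    linarith
  -- main term bound
  have hT1 : |∫ v in (-(3/8) : ℝ)..(3/8),
        (4 * v ^ 2 + ε ^ 2) ^ (-α) * ((Real.sqrt (1 + 2 * v))⁻¹ - 1 + v)|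
      ≤ |∫ v in (-(3/8) : ℝ)..(3/8), 8 * (4:ℝ) ^ (-α) * |v| ^ (2 - 2*α)| := by
    rw [← Real.norm_eq_abs (∫ v in (-(3/8) : ℝ)..(3/8),
      (4 * v ^ 2 + ε ^ 2) ^ (-α) * ((Real.sqrt (1 + 2 * v))⁻¹ - 1 + v))]
    apply intervalIntegral.norm_integral_le_abs_of_norm_le
    · refine (ae_restrict_iff' measurableSet_uIoc).mpr (Filter.Eventually.of_forall fun v hv => ?_)
      apply aux_main_pt hα1 hε0
      rw [uIoc_of_le (by norm_num : (-(3/8):ℝ) ≤ 3/8)] at hv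
      exact ⟨hv.1.le, hv.2⟩
    · exact (aux_intervalIntegrable_abs_rpow (by linarith : (-1:ℝ) < 2 - 2*α) (3/8)).const_mul _
  -- right piece bound
  have hT2 : |∫ v in ((3/8) : ℝ)..(5/8),
        (4 * v ^ 2 + ε ^ 2) ^ (-α) * (Real.sqrt (1 + 2 * v))⁻¹|
      ≤ (9/16 : ℝ) ^ (-α) * |(5/8 : ℝ) - 3/8| := by
    rw [← Real.norm_eq_abs (∫ v in ((3/8) : ℝ)..(5/8),
      (4 * v ^ 2 + ε ^ 2) ^ (-α) * (Real.sqrt (1 + 2 * v))⁻¹)]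
    apply intervalIntegral.norm_integral_le_of_norm_le_const
    intro v hv
    rw [uIoc_of_le (by norm_num : ((3/8):ℝ) ≤ 5/8)] at hv
    have hv1 : (3/8 : ℝ) < v := hv.1
    have hb1 : (4 * v ^ 2 + ε ^ 2) ^ (-α) ≤ (9/16 : ℝ) ^ (-α) :=
      Real.rpow_le_rpow_of_nonpos (by norm_num)
        (by nlinarith [sq_nonneg ε]) (by linarith)
    have hs1 : (1:ℝ) ≤ Real.sqrt (1 + 2 * v) := by
      rw [show (1:ℝ) = Real.sqrt 1 by simp]
      apply Real.sqrt_le_sqrt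
      rw [Real.sqrt_one]
      linarith
    have hb2 : (Real.sqrt (1 + 2 * v))⁻¹ ≤ 1 := by
      rw [inv_le_one_iff₀]
      right; exact hs1
    rw [Real.norm_eq_abs, abs_mul,
      abs_of_nonneg (Real.rpow_nonneg (by positivity) _),
      abs_of_nonneg (by positivity)]
    calc (4 * v ^ 2 + ε ^ 2) ^ (-α) * (Real.sqrt (1 + 2 * v))⁻¹
        ≤ (9/16 : ℝ) ^ (-α) * 1 :=
          mul_le_mul hb1 hb2 (by positivity) (Real.rpow_nonneg (by norm_num) _)
      _ = (9/16 : ℝ) ^ (-α) := mul_one _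
  have hT3 := aux_tail (ε := ε) hα1 hε0
  rw [hsplit, hmid, hodd, sub_zero]
  set A := ∫ v in (-(3/8) : ℝ)..(3/8),
    (4 * v ^ 2 + ε ^ 2) ^ (-α) * ((Real.sqrt (1 + 2 * v))⁻¹ - 1 + v) with hA
  set B := ∫ v in ((3/8) : ℝ)..(5/8),
    (4 * v ^ 2 + ε ^ 2) ^ (-α) * (Real.sqrt (1 + 2 * v))⁻¹ with hB
  set D := (∫ v : ℝ, (4 * v ^ 2 + ε ^ 2) ^ (-α))
    - ∫ v in (-(3/8) : ℝ)..(3/8), (4 * v ^ 2 + ε ^ 2) ^ (-α) with hD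
  have hre : A + (∫ v in (-(3/8) : ℝ)..(3/8), (4 * v ^ 2 + ε ^ 2) ^ (-α)) + B
      - (∫ v : ℝ, (4 * v ^ 2 + ε ^ 2) ^ (-α)) = A + B - D := by
    rw [hD]; ring
  rw [hre]
  have habs : |A + B - D| ≤ |A| + |B| + |D| := by
    calc |A + B - D| ≤ |A + B| + |D| := abs_sub _ _
      _ ≤ |A| + |B| + |D| := by linarith [abs_add_le A B]
  linarith
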